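/- For every integer m ≥ 2 and real c, the m-homogeneous polynomial P_m(z) = z₃⋯z_m·(z₁² − z₂² + c z₁ z₂) on ℂ^m has sup norm on the unit polydisc equal to sqrt(4 + c²), and the ℓ_{2m/(m+1)}-norm of its coefficients equals (2 + c^(2m/(m+1)))^((m+1)/(2m)) when c ≥ 0. -/

import Mathlib

lemma key_bound (c : ℝ) (a b : ℂ) (ha : ‖a‖ ≤ 1) (hb : ‖b‖ ≤ 1) :
    ‖a ^ 2 - b ^ 2 + (c : ℂ) * a * b‖ ≤ Real.sqrt (4 + c ^ 2) := by
  have ha2 : a.re ^ 2 + a.im ^ 2 ≤ 1 := by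
    have h := pow_le_pow_left₀ (norm_nonneg a) ha 2
    rw [Complex.sq_norm, Complex.normSq_apply, one_pow] at h
    nlinarith [h]
  have hb2 : b.re ^ 2 + b.im ^ 2 ≤ 1 := by
    have h := pow_le_pow_left₀ (norm_nonneg b) hb 2
    rw [Complex.sq_norm, Complex.normSq_apply, one_pow] at h
    nlinarith [h]
  have h1 : ‖a ^ 2 - b ^ 2 + (c : ℂ) * a * b‖ ^ 2 ≤ 4 + c ^ 2 := by
    rw [show ‖a ^ 2 - b ^ 2 + (c : ℂ) * a * b‖ ^ 2
        = Complex.normSq (a ^ 2 - b ^ 2 + (c : ℂ) * a * b) by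
      rw [Complex.sq_norm]]
    simp only [pow_two, Complex.normSq_apply, Complex.add_re, Complex.add_im, Complex.sub_re,
      Complex.sub_im, Complex.mul_re, Complex.mul_im, Complex.ofReal_re, Complex.ofReal_im]
    ring_nf
    nlinarith [sq_nonneg (4 * (a.re * b.re + a.im * b.im)
        - c * ((a.re^2 + a.im^2) - (b.re^2 + b.im^2))),
      sq_nonneg (a.im * b.re - a.re * b.im),
      sq_nonneg (a.re * b.re + a.im * b.im),
      mul_nonneg (mul_nonneg (by positivity : (0:ℝ) ≤ 4 + c^2)
        (by nlinarith : (0:ℝ) ≤ 2 - (a.re^2+a.im^2) - (b.re^2+b.im^2)))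
        (by positivity : (0:ℝ) ≤ 2 + (a.re^2+a.im^2) + (b.re^2+b.im^2)),
      sq_nonneg (a.re*b.im + a.im*b.re), sq_nonneg c]
  exact (Real.le_sqrt (norm_nonneg _) (by positivity)).mpr h1

theorem stmt_8 (m : ℕ) (hm : 2 ≤ m) (c : ℝ) :
    sSup {y : ℝ | ∃ z : Fin m → ℂ, (∀ i, ‖z i‖ ≤ 1) ∧
        y = ‖(∏ i ∈ Finset.univ.filter fun i : Fin m => 2 ≤ (i:ℕ), z i) *
              (z ⟨0, by omega⟩ ^ 2 - z ⟨1, by omega⟩ ^ 2 +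
                (c:ℂ) * z ⟨0, by omega⟩ * z ⟨1, by omega⟩)‖} =
      Real.sqrt (4 + c ^ 2) ∧
    (0 ≤ c →
      (‖(1:ℂ)‖ ^ ((2 * (m:ℝ)) / (m + 1)) + ‖(-1:ℂ)‖ ^ ((2 * (m:ℝ)) / (m + 1)) +
          |c| ^ ((2 * (m:ℝ)) / (m + 1))) ^ (((m:ℝ) + 1) / (2 * m)) =
        (2 + c ^ ((2 * (m:ℝ)) / (m + 1))) ^ (((m:ℝ) + 1) / (2 * m))) := by
  constructor
  · -- the sup part
    set w : Fin m → ℂ := fun i => if (i : ℕ) = 0 then Complex.I else 1 with hw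
    have hwle : ∀ i, ‖w i‖ ≤ 1 := by
      intro i; simp only [hw]; split <;> simp
    have hw0 : w ⟨0, by omega⟩ = Complex.I := by simp [hw]
    have hw1 : w ⟨1, by omega⟩ = 1 := by simp [hw]
    have hprod : (∏ i ∈ Finset.univ.filter fun i : Fin m => 2 ≤ (i:ℕ), w i) = 1 := by
      apply Finset.prod_eq_one
      intro i hi
      simp only [Finset.mem_filter] at hi
      have : (i : ℕ) ≠ 0 := by omega
      simp [hw, this]
    have hval : ‖(∏ i ∈ Finset.univ.filter fun i : Fin m => 2 ≤ (i:ℕ), w i) *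
              (w ⟨0, by omega⟩ ^ 2 - w ⟨1, by omega⟩ ^ 2 +
                (c:ℂ) * w ⟨0, by omega⟩ * w ⟨1, by omega⟩)‖ = Real.sqrt (4 + c ^ 2) := by
      rw [hprod, hw0, hw1, one_mul, Complex.I_sq]
      rw [show (-1 - 1 ^ 2 + (c:ℂ) * Complex.I * 1) = Complex.mk (-2) c by
        simp [Complex.ext_iff]; norm_num]
      rw [Complex.norm_def, Complex.normSq_mk]
      ring_nf
    have hub : ∀ y ∈ {y : ℝ | ∃ z : Fin m → ℂ, (∀ i, ‖z i‖ ≤ 1) ∧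
        y = ‖(∏ i ∈ Finset.univ.filter fun i : Fin m => 2 ≤ (i:ℕ), z i) *
              (z ⟨0, by omega⟩ ^ 2 - z ⟨1, by omega⟩ ^ 2 +
                (c:ℂ) * z ⟨0, by omega⟩ * z ⟨1, by omega⟩)‖},
        y ≤ Real.sqrt (4 + c ^ 2) := by
      rintro y ⟨z, hz, rfl⟩
      rw [norm_mul]
      have hp : ‖(∏ i ∈ Finset.univ.filter fun i : Fin m => 2 ≤ (i:ℕ), z i)‖ ≤ 1 := by
        rw [norm_prod]
        exact Finset.prod_le_one (fun i _ => norm_nonneg _) (fun i _ => hz i)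
      have hq := key_bound c _ _ (hz ⟨0, by omega⟩) (hz ⟨1, by omega⟩)
      have := mul_le_mul hp hq (norm_nonneg _) zero_le_one
      simpa using this
    apply le_antisymm
    · exact Real.sSup_le hub (by positivity)
    · exact le_csSup ⟨Real.sqrt (4 + c ^ 2), hub⟩ ⟨w, hwle, hval.symm⟩
  · intro hc
    rw [norm_one, show ‖(-1:ℂ)‖ = 1 by simp, Real.one_rpow, abs_of_nonneg hc]
    norm_num
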